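/- arXiv:2507.20376 — 4 statements merged into one kernel-verified Lean document; each statement's English description precedes it below -/
import Mathlib

section
/- Let F : ℂ → ℂ be an entire function, ρ > 0, C > 0, and suppose that |F(λ)| ≤ C/|Re λ| for all λ in the closed ball B̄(iv, ρ) with Re λ ≠ 0, for a fixed v ∈ ℝ. Then |F(λ)| ≤ 8C/(3ρ) for all λ ∈ B̄(iv, ρ/2). (Levinson's lemma, quantitative form: the bound on the half-ball radius gives |F| ≤ K C/ρ on B̄(iv, ρ/2) for an absolute constant K.) -/
open Complex Metric

/-- Levinson's lemma, quantitative form: if `F` is entire, `ρ > 0`, `C > 0`, and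
`|F(λ)| ≤ C/|Re λ|` for all `λ` in the closed ball `B̄(iv, ρ)` with `Re λ ≠ 0`, then
`|F(λ)| ≤ (8/3) C/ρ` on `B̄(iv, ρ/2)`. -/
theorem stmt13 (F : ℂ → ℂ) (hF : Differentiable ℂ F) (ρ C : ℝ) (hρ : 0 < ρ) (hC : 0 < C)
    (v : ℝ)
    (hbound : ∀ l ∈ closedBall ((v : ℂ) * Complex.I) ρ, l.re ≠ 0 → ‖F l‖ ≤ C / |l.re|) :
    ∀ l ∈ closedBall ((v : ℂ) * Complex.I) (ρ / 2), ‖F l‖ ≤ 8 * C / (3 * ρ) := by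
  set c : ℂ := (v : ℂ) * Complex.I with hc
  have hρ2 : (0:ℝ) < ρ ^ 2 := by positivity
  set G : ℂ → ℂ := fun z => F z * (1 + (z - c) ^ 2 / (ρ : ℂ) ^ 2) with hG
  have hGd : Differentiable ℂ G := by
    apply hF.mul
    apply Differentiable.const_add
    apply Differentiable.div_const
    exact (differentiable_id.sub_const c).pow 2
  -- the multiplier's norm on the sphere
  have hsphere : ∀ z ∈ sphere c ρ, ‖(1 : ℂ) + (z - c) ^ 2 / (ρ : ℂ) ^ 2‖ = 2 * |z.re| / ρ := by
    intro z hz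
    have hn : ‖z - c‖ = ρ := by simpa [mem_sphere_iff_norm] using hz
    set w : ℂ := z - c with hw
    have hre : w.re = z.re := by
      simp [hw, hc, Complex.sub_re, Complex.mul_re]
    have hρw : ((ρ : ℂ)) ^ 2 = w * (starRingEnd ℂ) w := by
      rw [Complex.mul_conj]
      norm_cast
      rw [← hn, Complex.normSq_eq_norm_sq]
    have key : (1 : ℂ) + w ^ 2 / (ρ : ℂ) ^ 2 = w * ((2:ℂ) * (w.re:ℂ)) / (ρ : ℂ) ^ 2 := by
      have hρc : ((ρ:ℂ))^2 ≠ 0 := by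
        norm_cast
        positivity
      rw [eq_div_iff hρc, add_mul, one_mul, div_mul_cancel₀ _ hρc, hρw]
      have hcast : ((2 * w.re : ℝ) : ℂ) = 2 * (w.re : ℂ) := by push_cast; ring
      linear_combination w * (Complex.add_conj w) + w * hcast
    rw [key]
    rw [norm_div, norm_mul]
    have h1 : ‖((2 * w.re : ℝ) : ℂ)‖ = 2 * |w.re| := by
      rw [Complex.norm_real]
      simp [abs_mul]
    have h2 : ((2 : ℂ) * (w.re : ℂ)) = ((2 * w.re : ℝ) : ℂ) := by push_cast; ring
    rw [h2, h1, hn, hre]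
    have : ‖((ρ:ℂ))^2‖ = ρ ^ 2 := by
      rw [norm_pow, Complex.norm_real, Real.norm_eq_abs, abs_of_pos hρ]
    rw [this]
    field_simp
  -- max modulus bound for G on the closed ball
  have hGbound : ∀ z ∈ closedBall c ρ, ‖G z‖ ≤ 2 * C / ρ := by
    intro z hz
    have hzcl : z ∈ closure (ball c ρ) := by
      rwa [closure_ball c hρ.ne']
    refine Complex.norm_le_of_forall_mem_frontier_norm_le isBounded_ball
      hGd.diffContOnCl ?_ hzcl
    intro w hw
    rw [frontier_ball c hρ.ne'] at hw
    have hmul := hsphere w hw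
    have hwball : w ∈ closedBall c ρ := sphere_subset_closedBall hw
    by_cases hre : w.re = 0
    · have : ‖G w‖ = ‖F w‖ * (2 * |w.re| / ρ) := by rw [hG]; simp [norm_mul, hmul]
      rw [this, hre]
      simp
      positivity
    · have hF' := hbound w hwball hre
      have habs : (0:ℝ) < |w.re| := abs_pos.mpr hre
      calc ‖G w‖ = ‖F w‖ * (2 * |w.re| / ρ) := by rw [hG]; simp [norm_mul, hmul]
        _ ≤ (C / |w.re|) * (2 * |w.re| / ρ) := by
            apply mul_le_mul_of_nonneg_right hF'
            positivity
        _ = 2 * C / ρ := by field_simp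
  -- conclude on the half ball
  intro l hl
  have hlball : l ∈ closedBall c ρ := by
    apply closedBall_subset_closedBall (half_le_self hρ.le) hl
  have hGl := hGbound l hlball
  set a : ℂ := (l - c) ^ 2 / (ρ : ℂ) ^ 2 with ha
  have hna : ‖a‖ ≤ 1 / 4 := by
    have hlc : ‖l - c‖ ≤ ρ / 2 := mem_closedBall_iff_norm.mp hl
    have : ‖a‖ = ‖l - c‖ ^ 2 / ρ ^ 2 := by
      rw [ha, norm_div, norm_pow, norm_pow, Complex.norm_real, Real.norm_eq_abs,
        abs_of_pos hρ]
    rw [this]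
    rw [div_le_div_iff₀ hρ2 (by norm_num)]
    nlinarith [norm_nonneg (l - c)]
  have hmlb : (3:ℝ) / 4 ≤ ‖(1:ℂ) + a‖ := by
    have h1 : ‖(1:ℂ)‖ ≤ ‖(1:ℂ) + a‖ + ‖a‖ := by
      calc ‖(1:ℂ)‖ = ‖(1 + a) + (-a)‖ := by ring_nf
        _ ≤ ‖(1:ℂ) + a‖ + ‖-a‖ := norm_add_le _ _
        _ = ‖(1:ℂ) + a‖ + ‖a‖ := by rw [norm_neg]
    have : ‖(1:ℂ)‖ = 1 := norm_one
    linarith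
  have hGleq : ‖G l‖ = ‖F l‖ * ‖(1:ℂ) + a‖ := by rw [hG]; simp [norm_mul, ha]
  have h34 : ‖F l‖ * (3/4) ≤ ‖F l‖ * ‖(1:ℂ) + a‖ :=
    mul_le_mul_of_nonneg_left hmlb (norm_nonneg _)
  have : ‖F l‖ * (3/4) ≤ 2 * C / ρ := by
    rw [hGleq] at hGl; linarith
  have h2 : ‖F l‖ * (3 / 4) * ρ ≤ 2 * C := by
    have h3 := mul_le_mul_of_nonneg_right this hρ.le
    rwa [div_mul_cancel₀ _ hρ.ne'] at h3
  rw [le_div_iff₀ (by linarith : (0:ℝ) < 3 * ρ)]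
  nlinarith [norm_nonneg (F l)]
end

section
/- Let δ : [0,∞) → (0,1) be non-increasing, Q ≥ 1, and let G : ℂ → ℂ be continuous on the strip {|Re λ| ≤ 1} satisfying the conclusion of the auxiliary lemma: for all v ∈ ℝ and λ ∈ B̄(iv, δ(|v|)), |G(λ)| ≤ |G(iv)| + 1 and δ(|v|)/δ(|Im λ|) ≤ Q. Define M(λ) = (1+|λ|)² · sup_{|Re μ| ≤ |Re λ|, Im μ = Im λ} (1 + |G(μ)|) / δ(|Im λ|). Then for every v ∈ ℝ and every λ ∈ B̄(iv, 1/M(iv)), one has M(λ)/M(iv) ≤ 8Q. -/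
open Complex Metric Set

/-- With `δ : [0,∞) → (0,1)` non-increasing, `Q ≥ 1`, and `G` continuous on the strip
satisfying the conclusion of the auxiliary lemma, define
`M(λ) = (1+|λ|)² sup_{|Re μ| ≤ |Re λ|, Im μ = Im λ} (1+|G(μ)|) / δ(|Im λ|)`.
Then for every `v ∈ ℝ` and every `λ ∈ B̄(iv, 1/M(iv))`, `M(λ)/M(iv) ≤ 8 Q`. -/
theorem stmt14 (δ : ℝ → ℝ) (hδmono : ∀ a b : ℝ, 0 ≤ a → a ≤ b → δ b ≤ δ a)
    (hδrange : ∀ a : ℝ, 0 ≤ a → δ a ∈ Set.Ioo (0 : ℝ) 1)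
    (Q : ℝ) (hQ : 1 ≤ Q)
    (G : ℂ → ℂ) (hG : ContinuousOn G {l : ℂ | |l.re| ≤ 1})
    (hlem : ∀ v : ℝ, ∀ l ∈ closedBall ((v : ℂ) * Complex.I) (δ |v|),
      ‖G l‖ ≤ ‖G ((v : ℂ) * Complex.I)‖ + 1 ∧ δ |v| / δ |l.im| ≤ Q)
    (M : ℂ → ℝ)
    (hM : ∀ l : ℂ, M l = (1 + ‖l‖) ^ 2 *
      sSup ((fun m : ℂ => 1 + ‖G m‖) '' {m : ℂ | |m.re| ≤ |l.re| ∧ m.im = l.im}) /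
        δ |l.im|) :
    ∀ v : ℝ, ∀ l ∈ closedBall ((v : ℂ) * Complex.I) (1 / M ((v : ℂ) * Complex.I)),
      M l / M ((v : ℂ) * Complex.I) ≤ 8 * Q := by
  intro v l hl
  set iv : ℂ := (v : ℂ) * Complex.I with hiv
  have hre : iv.re = 0 := by simp [hiv]
  have him : iv.im = v := by simp [hiv]
  have hniv : ‖iv‖ = |v| := by simp [hiv]
  obtain ⟨hδv0, hδv1⟩ := hδrange |v| (abs_nonneg v)
  have hset : {m : ℂ | |m.re| ≤ |iv.re| ∧ m.im = iv.im} = {iv} := by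
    ext m
    constructor
    · rintro ⟨h1, h2⟩
      have hmre : m.re = 0 := by
        rw [hre] at h1; simpa using abs_nonpos_iff.mp (by simpa using h1)
      exact Complex.ext (by rw [hmre, hre]) h2
    · rintro rfl; exact ⟨le_refl _, rfl⟩
  have hMiv : M iv = (1 + |v|) ^ 2 * (1 + ‖G iv‖) / δ |v| := by
    rw [hM, hset, Set.image_singleton, csSup_singleton, hniv, him]
  have hA1 : (1 : ℝ) ≤ (1 + |v|) ^ 2 * (1 + ‖G iv‖) := by
    nlinarith [abs_nonneg v, norm_nonneg (G iv)]
  have hMivpos : 0 < M iv := by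
    rw [hMiv]; positivity
  have h1d : 1 / δ |v| ≤ M iv := by
    rw [hMiv]; gcongr
  have hr : 1 / M iv ≤ δ |v| := by
    have h2 : 0 < 1 / δ |v| := by positivity
    calc 1 / M iv ≤ 1 / (1 / δ |v|) := one_div_le_one_div_of_le h2 h1d
      _ = δ |v| := one_div_one_div _
  have hl' : l ∈ closedBall iv (δ |v|) :=
    closedBall_subset_closedBall hr hl
  obtain ⟨hGl, hQl⟩ := hlem v l hl'
  -- members of the set are in the ball
  have hmem : ∀ m : ℂ, |m.re| ≤ |l.re| → m.im = l.im → m ∈ closedBall iv (δ |v|) := by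
    intro m h1 h2
    have hd : dist m iv ≤ dist l iv := by
      rw [Complex.dist_eq_re_im, Complex.dist_eq_re_im]
      apply Real.sqrt_le_sqrt
      have h3 : m.re ^ 2 ≤ l.re ^ 2 := by
        rw [← _root_.sq_abs m.re, ← _root_.sq_abs l.re]
        exact pow_le_pow_left₀ (abs_nonneg _) h1 2
      rw [h2, hre]
      simp only [sub_zero]
      linarith
    exact mem_closedBall.mpr (hd.trans (mem_closedBall.mp hl'))
  set S := sSup ((fun m : ℂ => 1 + ‖G m‖) '' {m : ℂ | |m.re| ≤ |l.re| ∧ m.im = l.im})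
    with hS
  have hlmem : (1 + ‖G l‖) ∈ (fun m : ℂ => 1 + ‖G m‖) ''
      {m : ℂ | |m.re| ≤ |l.re| ∧ m.im = l.im} := ⟨l, ⟨le_refl _, rfl⟩, rfl⟩
  have hbdd : BddAbove ((fun m : ℂ => 1 + ‖G m‖) ''
      {m : ℂ | |m.re| ≤ |l.re| ∧ m.im = l.im}) := by
    refine ⟨2 + ‖G iv‖, ?_⟩
    rintro x ⟨m, ⟨h1, h2⟩, rfl⟩
    have h4 := (hlem v m (hmem m h1 h2)).1
    rw [← hiv] at h4
    show 1 + ‖G m‖ ≤ 2 + ‖G iv‖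
    linarith
  have hSle : S ≤ 2 + ‖G iv‖ := by
    apply csSup_le ⟨_, hlmem⟩
    rintro x ⟨m, ⟨h1, h2⟩, rfl⟩
    have h4 := (hlem v m (hmem m h1 h2)).1
    rw [← hiv] at h4
    show 1 + ‖G m‖ ≤ 2 + ‖G iv‖
    linarith
  have hS0 : 0 ≤ S := le_trans (by positivity) (le_csSup hbdd hlmem)
  obtain ⟨hδl0, hδl1⟩ := hδrange |l.im| (abs_nonneg l.im)
  have hnl : ‖l‖ ≤ 1 + |v| := by
    have h1 : ‖l‖ ≤ ‖iv‖ + ‖l - iv‖ := by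
      calc ‖l‖ = ‖iv + (l - iv)‖ := by ring_nf
        _ ≤ ‖iv‖ + ‖l - iv‖ := norm_add_le _ _
    have h2 : ‖l - iv‖ ≤ δ |v| := by
      simpa [dist_eq_norm] using mem_closedBall.mp hl'
    rw [hniv] at h1
    linarith
  have hinv : 1 / δ |l.im| ≤ Q / δ |v| := by
    rw [div_le_div_iff₀ hδl0 hδv0]
    calc 1 * δ |v| = δ |v| / δ |l.im| * δ |l.im| := by field_simp
      _ ≤ Q * δ |l.im| := by gcongr
  have hkey : M l ≤ 8 * Q * M iv := by
    calc M l = (1 + ‖l‖) ^ 2 * S * (1 / δ |l.im|) := by rw [hM l, ← hS]; ring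
      _ ≤ (2 * (1 + |v|)) ^ 2 * (2 * (1 + ‖G iv‖)) * (Q / δ |v|) := by
          gcongr <;> nlinarith [abs_nonneg v, norm_nonneg (G iv)]
      _ = 8 * Q * ((1 + |v|) ^ 2 * (1 + ‖G iv‖) / δ |v|) := by ring
      _ = 8 * Q * M iv := by rw [hMiv]
  rw [div_le_iff₀ hMivpos]
  exact hkey
end

section
/- Let X be the space of bounded uniformly continuous functions f : [0,∞) → ℂ whose Laplace transform extends to an entire function F_f with |F_f(λ)|/M(λ) → 0 as |λ| → ∞, where M : ℂ → [1,∞) is a fixed continuous weight with M → ∞ at infinity. Equipped with the norm ‖f‖_X = ‖f‖_{L^∞} + sup_{λ∈ℂ} |F_f(λ)|/M(λ), X is a Banach space. -/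
open Complex Filter MeasureTheory Set

/-- Membership in the space `X`: `f` is bounded and uniformly continuous on `[0,∞)` and `F`
is an entire extension of its Laplace transform with `|F(λ)|/M(λ) → 0` as `|λ| → ∞`. -/
def MemX (M : ℂ → ℝ) (f : ℝ → ℂ) (F : ℂ → ℂ) : Prop :=
  (∃ C : ℝ, ∀ t : ℝ, 0 ≤ t → ‖f t‖ ≤ C) ∧ UniformContinuousOn f (Set.Ici 0) ∧
    Differentiable ℂ F ∧
    (∀ l : ℂ, 0 < l.re → F l = ∫ t in Set.Ioi (0 : ℝ), f t * Complex.exp (-l * t)) ∧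
    Tendsto (fun l : ℂ => ‖F l‖ / M l) (cocompact ℂ) (nhds 0)

/-- The `X`-norm `‖f‖_X = ‖f‖_{L^∞} + sup_{λ ∈ ℂ} |F(λ)|/M(λ)`. -/
noncomputable def normX (M : ℂ → ℝ) (f : ℝ → ℂ) (F : ℂ → ℂ) : ℝ :=
  (⨆ t : Set.Ici (0 : ℝ), ‖f t‖) + ⨆ l : ℂ, ‖F l‖ / M l

private lemma bddAbove_of_cocompact {h : ℂ → ℝ} (hc : Continuous h)
    (ht : Tendsto h (cocompact ℂ) (nhds 0)) : BddAbove (Set.range h) := by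
  have h1 : h ⁻¹' (Set.Iio 1) ∈ cocompact ℂ := ht (Iio_mem_nhds one_pos)
  obtain ⟨K, hK, hKs⟩ := mem_cocompact.mp h1
  obtain ⟨C, hC⟩ := (hK.image hc).bddAbove
  refine ⟨max C 1, ?_⟩
  rintro _ ⟨x, rfl⟩
  by_cases hx : x ∈ K
  · exact le_max_of_le_left (hC ⟨x, hx, rfl⟩)
  · exact le_max_of_le_right (le_of_lt (hKs hx))

private lemma laplace_integrable {h : ℝ → ℂ} {C : ℝ}
    (hb : ∀ t : ℝ, 0 ≤ t → ‖h t‖ ≤ C)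
    (hm : AEStronglyMeasurable h (volume.restrict (Set.Ioi 0)))
    {l : ℂ} (hl : 0 < l.re) :
    IntegrableOn (fun t : ℝ => h t * Complex.exp (-l * t)) (Set.Ioi 0) := by
  refine Integrable.mono' ((exp_neg_integrableOn_Ioi 0 hl).const_mul C) ?_ ?_
  · exact hm.mul ((Complex.continuous_exp.comp (by fun_prop)).aestronglyMeasurable)
  · filter_upwards [ae_restrict_mem measurableSet_Ioi] with t ht
    have h1 : ‖Complex.exp (-l * t)‖ = Real.exp (-l.re * t) := by
      rw [Complex.norm_exp]
      congr 1
      simp [Complex.mul_re]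
    rw [norm_mul, h1]
    have := hb t (le_of_lt ht)
    have h2 : (0:ℝ) < Real.exp (-l.re * t) := Real.exp_pos _
    nlinarith [norm_nonneg (h t)]

/-- The space `X` of bounded uniformly continuous functions on `[0,∞)` whose Laplace
transform extends to an entire function decaying relative to the weight `M`, equipped with
the norm `‖f‖_X`, is complete (i.e. it is a Banach space): every Cauchy sequence in `X`
converges in `X`-norm to an element of `X`. -/
theorem stmt15 (M : ℂ → ℝ) (hMc : Continuous M) (hM1 : ∀ l : ℂ, 1 ≤ M l)
    (hMinf : Tendsto M (cocompact ℂ) atTop)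
    (f : ℕ → ℝ → ℂ) (F : ℕ → ℂ → ℂ) (hmem : ∀ n : ℕ, MemX M (f n) (F n))
    (hcauchy : ∀ ε : ℝ, 0 < ε → ∃ N : ℕ, ∀ m n : ℕ, N ≤ m → N ≤ n →
      normX M (f m - f n) (F m - F n) < ε) :
    ∃ g : ℝ → ℂ, ∃ G : ℂ → ℂ, MemX M g G ∧
      Tendsto (fun n : ℕ => normX M (f n - g) (F n - G)) atTop (nhds 0) := by
  haveI : Nonempty (Set.Ici (0:ℝ)) := ⟨⟨0, Set.self_mem_Ici⟩⟩
  have hMpos : ∀ l : ℂ, (0:ℝ) < M l := fun l => lt_of_lt_of_le one_pos (hM1 l)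
  have hMne : ∀ l : ℂ, M l ≠ 0 := fun l => ne_of_gt (hMpos l)
  -- nonnegativity of the two sup terms, for arbitrary pairs of functions
  have hsup1_nonneg : ∀ (h : ℝ → ℂ), (0:ℝ) ≤ ⨆ t : Set.Ici (0:ℝ), ‖h t‖ :=
    fun h => Real.iSup_nonneg (fun t => norm_nonneg _)
  have hsup2_nonneg : ∀ (H : ℂ → ℂ), (0:ℝ) ≤ ⨆ l : ℂ, ‖H l‖ / M l :=
    fun H => Real.iSup_nonneg (fun l => div_nonneg (norm_nonneg _) (le_of_lt (hMpos l)))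
  -- pointwise bounds by normX for differences
  have hb1 : ∀ m n : ℕ, ∀ t : ℝ, 0 ≤ t →
      ‖f m t - f n t‖ ≤ normX M (f m - f n) (F m - F n) := by
    intro m n t ht
    obtain ⟨Cm, hCm⟩ := (hmem m).1
    obtain ⟨Cn, hCn⟩ := (hmem n).1
    have hbdd : BddAbove (Set.range fun t : Set.Ici (0:ℝ) => ‖(f m - f n) (t:ℝ)‖) := by
      refine ⟨Cm + Cn, ?_⟩
      rintro _ ⟨s, rfl⟩
      calc ‖(f m - f n) (s:ℝ)‖ = ‖f m s - f n s‖ := by simp [Pi.sub_apply]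
        _ ≤ ‖f m (s:ℝ)‖ + ‖f n (s:ℝ)‖ := norm_sub_le _ _
        _ ≤ Cm + Cn := add_le_add (hCm s s.2) (hCn s s.2)
    have h1 : ‖f m t - f n t‖ ≤ ⨆ s : Set.Ici (0:ℝ), ‖(f m - f n) (s:ℝ)‖ := by
      have := le_ciSup hbdd ⟨t, ht⟩
      simpa [Pi.sub_apply] using this
    exact h1.trans (le_add_of_nonneg_right (hsup2_nonneg _))
  have hb2 : ∀ m n : ℕ, ∀ l : ℂ,
      ‖F m l - F n l‖ ≤ M l * normX M (f m - f n) (F m - F n) := by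
    intro m n l
    have hcont : Continuous fun l : ℂ => ‖(F m - F n) l‖ / M l := by
      refine Continuous.div ?_ hMc hMne
      exact (((hmem m).2.2.1.continuous.sub (hmem n).2.2.1.continuous)).norm
    have htend : Tendsto (fun l : ℂ => ‖(F m - F n) l‖ / M l) (cocompact ℂ) (nhds 0) := by
      refine squeeze_zero (fun l => div_nonneg (norm_nonneg _) (le_of_lt (hMpos l)))
        (g := fun l => ‖F m l‖ / M l + ‖F n l‖ / M l) ?_ ?_
      · intro l
        have hns : ‖(F m - F n) l‖ ≤ ‖F m l‖ + ‖F n l‖ := by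
          simpa using norm_sub_le (F m l) (F n l)
        show ‖(F m - F n) l‖ / M l ≤ ‖F m l‖ / M l + ‖F n l‖ / M l
        rw [← add_div]
        gcongr
        exact le_of_lt (hMpos l)
      · simpa using (hmem m).2.2.2.2.add (hmem n).2.2.2.2
    have hbdd := bddAbove_of_cocompact hcont htend
    have h1 : ‖(F m - F n) l‖ / M l ≤ ⨆ l : ℂ, ‖(F m - F n) l‖ / M l :=
      le_ciSup hbdd l
    have h2 : ‖F m l - F n l‖ / M l ≤ normX M (f m - f n) (F m - F n) := by
      refine le_trans ?_ (le_add_of_nonneg_left (hsup1_nonneg _))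
      simpa [Pi.sub_apply] using h1
    rw [div_le_iff₀ (hMpos l)] at h2
    linarith [h2]
  -- Cauchy sequences pointwise, limits
  have hcau_t : ∀ t : ℝ, 0 ≤ t → CauchySeq (fun n => f n t) := by
    intro t ht
    rw [Metric.cauchySeq_iff]
    intro ε hε
    obtain ⟨N, hN⟩ := hcauchy ε hε
    exact ⟨N, fun m hm n hn => lt_of_le_of_lt (by
      rw [dist_eq_norm]; exact hb1 m n t ht) (hN m n hm hn)⟩
  have hcau_l : ∀ l : ℂ, CauchySeq (fun n => F n l) := by
    intro l
    rw [Metric.cauchySeq_iff]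
    intro ε hε
    obtain ⟨N, hN⟩ := hcauchy (ε / M l) (div_pos hε (hMpos l))
    refine ⟨N, fun m hm n hn => ?_⟩
    rw [dist_eq_norm]
    calc ‖F m l - F n l‖ ≤ M l * normX M (f m - f n) (F m - F n) := hb2 m n l
      _ < M l * (ε / M l) := by
          exact (mul_lt_mul_iff_right₀ (hMpos l)).mpr (hN m n hm hn)
      _ = ε := by rw [mul_comm]; exact div_mul_cancel₀ ε (hMne l)
  set g : ℝ → ℂ := fun t => limUnder atTop (fun n => f n t) with hg_def
  set G : ℂ → ℂ := fun l => limUnder atTop (fun n => F n l) with hG_def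
  have hgt : ∀ t : ℝ, 0 ≤ t → Tendsto (fun n => f n t) atTop (nhds (g t)) :=
    fun t ht => (hcau_t t ht).tendsto_limUnder
  have hGl : ∀ l : ℂ, Tendsto (fun n => F n l) atTop (nhds (G l)) :=
    fun l => (hcau_l l).tendsto_limUnder
  -- the key uniform estimate
  have key : ∀ ε : ℝ, 0 < ε → ∃ N : ℕ, ∀ n : ℕ, N ≤ n →
      (∀ t : ℝ, 0 ≤ t → ‖f n t - g t‖ ≤ ε) ∧ (∀ l : ℂ, ‖F n l - G l‖ ≤ ε * M l) := by
    intro ε hε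
    obtain ⟨N, hN⟩ := hcauchy (ε / 2) (by linarith)
    refine ⟨N, fun n hn => ⟨?_, ?_⟩⟩
    · intro t ht
      have h1 : Tendsto (fun m => ‖f m t - f n t‖) atTop (nhds ‖g t - f n t‖) :=
        ((hgt t ht).sub tendsto_const_nhds).norm
      have h2 : ∀ᶠ m in atTop, ‖f m t - f n t‖ ≤ ε / 2 := by
        filter_upwards [eventually_ge_atTop N] with m hm
        exact le_of_lt (lt_of_le_of_lt (hb1 m n t ht) (hN m n hm hn))
      have := le_of_tendsto h1 h2
      rw [norm_sub_rev]
      linarith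
    · intro l
      have h1 : Tendsto (fun m => ‖F m l - F n l‖) atTop (nhds ‖G l - F n l‖) :=
        ((hGl l).sub tendsto_const_nhds).norm
      have h2 : ∀ᶠ m in atTop, ‖F m l - F n l‖ ≤ M l * (ε / 2) := by
        filter_upwards [eventually_ge_atTop N] with m hm
        exact le_of_lt (lt_of_le_of_lt (hb2 m n l)
          ((mul_lt_mul_iff_right₀ (hMpos l)).mpr (hN m n hm hn)))
      have h3 := le_of_tendsto h1 h2
      rw [norm_sub_rev]
      nlinarith [hMpos l]
  -- boundedness of g
  obtain ⟨N1, hN1⟩ := key 1 one_pos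
  obtain ⟨C1, hC1⟩ := (hmem N1).1
  have hgbdd : ∀ t : ℝ, 0 ≤ t → ‖g t‖ ≤ C1 + 1 := by
    intro t ht
    calc ‖g t‖ = ‖f N1 t - (f N1 t - g t)‖ := by ring_nf
      _ ≤ ‖f N1 t‖ + ‖f N1 t - g t‖ := norm_sub_le _ _
      _ ≤ C1 + 1 := add_le_add (hC1 t ht) ((hN1 N1 le_rfl).1 t ht)
  -- uniform continuity of g on Ici 0
  have hguc : UniformContinuousOn g (Set.Ici 0) := by
    rw [Metric.uniformContinuousOn_iff]
    intro ε hε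
    obtain ⟨N, hN⟩ := key (ε / 4) (by linarith)
    obtain ⟨δ, hδ, hδ'⟩ := Metric.uniformContinuousOn_iff.mp (hmem N).2.1 (ε / 4) (by linarith)
    refine ⟨δ, hδ, fun x hx y hy hxy => ?_⟩
    have h1 : dist (g x) (f N x) ≤ ε / 4 := by
      rw [dist_comm, dist_eq_norm]; exact (hN N le_rfl).1 x hx
    have h2 : dist (f N y) (g y) ≤ ε / 4 := by
      rw [dist_eq_norm]; exact (hN N le_rfl).1 y hy
    have h3 := hδ' x hx y hy hxy
    calc dist (g x) (g y) ≤ dist (g x) (f N x) + dist (f N x) (f N y) + dist (f N y) (g y) :=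
          dist_triangle4 _ _ _ _
      _ < ε / 4 + ε / 4 + ε / 4 := by
          refine add_lt_add_of_lt_of_le (add_lt_add_of_le_of_lt h1 h3) h2
      _ < ε := by linarith
  -- locally uniform convergence of F to G, hence G entire
  have hluc : TendstoLocallyUniformly F G atTop := by
    rw [tendstoLocallyUniformly_iff_forall_isCompact]
    intro K hK
    rw [Metric.tendstoUniformlyOn_iff]
    intro ε hε
    obtain ⟨CK, hCK⟩ := (hK.image hMc).bddAbove
    set C' : ℝ := max CK 1 with hC'
    have hC'pos : (0:ℝ) < C' := lt_of_lt_of_le one_pos (le_max_right _ _)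
    obtain ⟨N, hN⟩ := key (ε / (2 * C')) (by positivity)
    filter_upwards [eventually_ge_atTop N] with n hn
    intro l hl
    have h1 : ‖F n l - G l‖ ≤ ε / (2 * C') * M l := (hN n hn).2 l
    have h2 : M l ≤ C' := le_max_of_le_left (hCK ⟨l, hl, rfl⟩)
    rw [dist_comm, dist_eq_norm]
    calc ‖F n l - G l‖ ≤ ε / (2 * C') * M l := h1
      _ ≤ ε / (2 * C') * C' := by
          exact mul_le_mul_of_nonneg_left h2 (by positivity)
      _ = ε / 2 := by field_simp
      _ < ε := by linarith
  have hGdiff : Differentiable ℂ G := by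
    have h1 : TendstoLocallyUniformlyOn F G atTop Set.univ :=
      (tendstoLocallyUniformlyOn_univ).mpr hluc
    have h2 : DifferentiableOn ℂ G Set.univ := by
      refine h1.differentiableOn ?_ isOpen_univ
      exact Eventually.of_forall fun n => ((hmem n).2.2.1).differentiableOn
    rw [← differentiableOn_univ]
    exact h2
  -- measurability of g on Ioi 0
  have hfmeas : ∀ n : ℕ, AEStronglyMeasurable (f n) (volume.restrict (Set.Ioi 0)) := by
    intro n
    exact (((hmem n).2.1.continuousOn).mono Ioi_subset_Ici_self).aestronglyMeasurable
      measurableSet_Ioi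
  have hgmeas : AEStronglyMeasurable g (volume.restrict (Set.Ioi 0)) := by
    refine aestronglyMeasurable_of_tendsto_ae atTop hfmeas ?_
    filter_upwards [ae_restrict_mem measurableSet_Ioi] with t ht
    exact hgt t (le_of_lt ht)
  -- Laplace transform identity for G
  have hGlap : ∀ l : ℂ, 0 < l.re → G l = ∫ t in Set.Ioi (0:ℝ), g t * Complex.exp (-l * t) := by
    intro l hl
    have hgint : IntegrableOn (fun t : ℝ => g t * Complex.exp (-l * t)) (Set.Ioi 0) :=
      laplace_integrable hgbdd hgmeas hl
    have hfint : ∀ n : ℕ, IntegrableOn (fun t : ℝ => f n t * Complex.exp (-l * t)) (Set.Ioi 0) := by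
      intro n
      obtain ⟨C, hC⟩ := (hmem n).1
      exact laplace_integrable hC (hfmeas n) hl
    have hItend : Tendsto (fun n => ∫ t in Set.Ioi (0:ℝ), f n t * Complex.exp (-l * t)) atTop
        (nhds (∫ t in Set.Ioi (0:ℝ), g t * Complex.exp (-l * t))) := by
      rw [Metric.tendsto_atTop]
      intro ε hε
      set V : ℝ := ∫ t in Set.Ioi (0:ℝ), Real.exp (-l.re * t) with hV
      have hV0 : 0 ≤ V := integral_nonneg fun t => le_of_lt (Real.exp_pos _)
      have hVint : IntegrableOn (fun t : ℝ => Real.exp (-l.re * t)) (Set.Ioi 0) :=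
        exp_neg_integrableOn_Ioi 0 hl
      set ε' : ℝ := ε / (2 * (V + 1)) with hε'
      have hε'pos : 0 < ε' := by positivity
      obtain ⟨N, hN⟩ := key ε' hε'pos
      refine ⟨N, fun n hn => ?_⟩
      rw [dist_eq_norm, ← integral_sub (hfint n) hgint]
      have hnorm : ‖∫ t in Set.Ioi (0:ℝ),
          (f n t * Complex.exp (-l * t) - g t * Complex.exp (-l * t))‖
          ≤ ∫ t in Set.Ioi (0:ℝ), ε' * Real.exp (-l.re * t) := by
        refine norm_integral_le_of_norm_le (hVint.const_mul ε') ?_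
        filter_upwards [ae_restrict_mem measurableSet_Ioi] with t ht
        rw [← sub_mul, norm_mul]
        have h1 : ‖Complex.exp (-l * t)‖ = Real.exp (-l.re * t) := by
          rw [Complex.norm_exp]
          congr 1
          simp [Complex.mul_re]
        rw [h1]
        have h2 := (hN n hn).1 t (le_of_lt ht)
        have h3 : (0:ℝ) < Real.exp (-l.re * t) := Real.exp_pos _
        nlinarith [norm_nonneg (f n t - g t)]
      have hval : (∫ t in Set.Ioi (0:ℝ), ε' * Real.exp (-l.re * t)) = ε' * V := by
        rw [hV, integral_const_mul]
      rw [hval] at hnorm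
      refine lt_of_le_of_lt hnorm ?_
      have : ε' * V < ε' * (2 * (V + 1)) := by nlinarith
      calc ε' * V < ε' * (2 * (V + 1)) := this
        _ = ε := by
          have hV1 : (2:ℝ) * (V + 1) ≠ 0 := by positivity
          rw [hε', div_mul_cancel₀ _ hV1]
    have hFtend : Tendsto (fun n => F n l) atTop
        (nhds (∫ t in Set.Ioi (0:ℝ), g t * Complex.exp (-l * t))) := by
      refine hItend.congr fun n => ?_
      exact ((hmem n).2.2.2.1 l hl).symm
    exact tendsto_nhds_unique (hGl l) hFtend
  -- decay of G
  have hGdecay : Tendsto (fun l : ℂ => ‖G l‖ / M l) (cocompact ℂ) (nhds 0) := by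
    rw [Metric.tendsto_nhds]
    intro ε hε
    obtain ⟨N, hN⟩ := key (ε / 4) (by linarith)
    have h1 : ∀ᶠ l in cocompact ℂ, ‖F N l‖ / M l < ε / 2 := by
      have := Metric.tendsto_nhds.mp (hmem N).2.2.2.2 (ε / 2) (by linarith)
      filter_upwards [this] with l hl
      have : |‖F N l‖ / M l| < ε / 2 := by
        rw [Real.dist_eq, sub_zero] at hl; exact hl
      exact lt_of_le_of_lt (le_abs_self _) this
    filter_upwards [h1] with l hl
    rw [Real.dist_eq, sub_zero, _root_.abs_of_nonneg (div_nonneg (norm_nonneg _) (le_of_lt (hMpos l)))]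
    have h2 : ‖G l‖ ≤ ‖F N l‖ + ε / 4 * M l := by
      have h3 : ‖F N l - G l‖ ≤ ε / 4 * M l := (hN N le_rfl).2 l
      calc ‖G l‖ = ‖F N l - (F N l - G l)‖ := by ring_nf
        _ ≤ ‖F N l‖ + ‖F N l - G l‖ := norm_sub_le _ _
        _ ≤ ‖F N l‖ + ε / 4 * M l := by linarith
    have h4 : ‖G l‖ / M l ≤ ‖F N l‖ / M l + ε / 4 := by
      rw [div_le_iff₀ (hMpos l)]
      have h5 : (‖F N l‖ / M l) * M l = ‖F N l‖ := div_mul_cancel₀ _ (hMne l)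
      nlinarith [hMpos l, h2]
    linarith
  -- final convergence in normX
  have hfinal : Tendsto (fun n : ℕ => normX M (f n - g) (F n - G)) atTop (nhds 0) := by
    rw [Metric.tendsto_atTop]
    intro ε hε
    obtain ⟨N, hN⟩ := key (ε / 4) (by linarith)
    refine ⟨N, fun n hn => ?_⟩
    have h1 : (⨆ t : Set.Ici (0:ℝ), ‖(f n - g) (t:ℝ)‖) ≤ ε / 4 := by
      refine ciSup_le fun t => ?_
      simpa [Pi.sub_apply] using (hN n hn).1 t t.2
    have h2 : (⨆ l : ℂ, ‖(F n - G) l‖ / M l) ≤ ε / 4 := by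
      refine ciSup_le fun l => ?_
      rw [div_le_iff₀ (hMpos l)]
      have := (hN n hn).2 l
      calc ‖(F n - G) l‖ = ‖F n l - G l‖ := by simp [Pi.sub_apply]
        _ ≤ ε / 4 * M l := this
    rw [Real.dist_eq, sub_zero]
    have hnn : 0 ≤ normX M (f n - g) (F n - G) :=
      add_nonneg (hsup1_nonneg _) (hsup2_nonneg _)
    rw [_root_.abs_of_nonneg hnn]
    calc normX M (f n - g) (F n - G) ≤ ε / 4 + ε / 4 := add_le_add h1 h2
      _ < ε := by linarith
  exact ⟨g, G, ⟨⟨C1 + 1, hgbdd⟩, hguc, hGdiff, hGlap, hGdecay⟩, hfinal⟩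
end

section
/- Let f : [0,∞) → ℂ be bounded and continuous with Laplace transform extending analytically to an open neighborhood of the closed half-plane {Re λ ≥ 0}. Then for every purely imaginary λ = iv, the primitive t ↦ ∫₀^t e^{-ivs} f(s) ds is bounded on [0,∞). -/
open Complex MeasureTheory Set intervalIntegral Filter

/-- continuity of the integrand in t -/
lemma lap_cont {g : ℝ → ℂ} (hg : ContinuousOn g (Ici 0)) (z : ℂ) :
    ContinuousOn (fun t : ℝ => Complex.exp (-z * t) * g t) (Ici 0) := by
  exact (Continuous.continuousOn (by continuity)).mul hg

/-- The truncated Laplace transform is entire. -/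
lemma GT_differentiable {g : ℝ → ℂ} (hg : ContinuousOn g (Ici 0)) {T : ℝ} (hT : 0 ≤ T) :
    Differentiable ℂ (fun z : ℂ => ∫ t in (0:ℝ)..T, Complex.exp (-z * t) * g t) := by
  intro z₀
  -- bound for g on [0,T]
  obtain ⟨Bg, hBg⟩ := (isCompact_Icc (a := (0:ℝ)) (b := T)).exists_bound_of_continuousOn
    (hg.mono (Icc_subset_Ici_self))
  have hmeas : ∀ z : ℂ, AEStronglyMeasurable (fun t : ℝ => Complex.exp (-z * t) * g t)
      (volume.restrict (Set.uIoc (0:ℝ) T)) := by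
    intro z
    apply ContinuousOn.aestronglyMeasurable _ measurableSet_uIoc
    apply (lap_cont hg z).mono
    rw [uIoc_of_le hT]
    exact fun t ht => le_of_lt ht.1
  have hint : ∀ z : ℂ, IntervalIntegrable (fun t : ℝ => Complex.exp (-z * t) * g t)
      volume 0 T := by
    intro z
    apply ContinuousOn.intervalIntegrable
    apply (lap_cont hg z).mono
    rw [uIcc_of_le hT]; exact Icc_subset_Ici_self
  have key := intervalIntegral.hasDerivAt_integral_of_dominated_loc_of_deriv_le
    (F := fun (z : ℂ) (t : ℝ) => Complex.exp (-z * t) * g t)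
    (F' := fun (z : ℂ) (t : ℝ) => (Complex.exp (-z * t) * (-(t:ℂ))) * g t)
    (x₀ := z₀) (a := 0) (b := T) (μ := volume)
    (bound := fun _ : ℝ => Real.exp ((|z₀.re| + 1) * T) * T * Bg)
    (Metric.ball_mem_nhds z₀ one_pos) ?_ (hint z₀) ?_ ?_ ?_ ?_
  · exact key.2.differentiableAt
  · filter_upwards with z using hmeas z
  · apply ContinuousOn.aestronglyMeasurable _ measurableSet_uIoc
    apply ContinuousOn.mul _ (hg.mono (by rw [uIoc_of_le hT]; exact fun t ht => le_of_lt ht.1))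
    · apply Continuous.continuousOn; continuity
  · filter_upwards with t
    intro ht z hz
    rw [uIoc_of_le hT] at ht
    have ht0 : 0 ≤ t := le_of_lt ht.1
    have htT : t ≤ T := ht.2
    have h1 : ‖Complex.exp (-z * t)‖ = Real.exp (-z.re * t) := by
      rw [Complex.norm_exp]
      congr 1
      simp [Complex.mul_re]
    have hzre : |z.re| ≤ |z₀.re| + 1 := by
      have := Complex.abs_re_le_norm (z - z₀)
      have hz' : ‖z - z₀‖ < 1 := by
        simpa [Metric.mem_ball, Complex.dist_eq] using hz
      simp only [Complex.sub_re] at this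
      calc |z.re| ≤ |z.re - z₀.re| + |z₀.re| := by
            simpa using abs_add_le (z.re - z₀.re) z₀.re
        _ ≤ |z₀.re| + 1 := by linarith [this.trans hz'.le]
    rw [norm_mul, norm_mul, h1]
    have hb1 : Real.exp (-z.re * t) ≤ Real.exp ((|z₀.re| + 1) * T) := by
      apply Real.exp_le_exp.2
      calc -z.re * t ≤ |z.re| * t := by
            apply mul_le_mul_of_nonneg_right _ ht0
            exact neg_le_abs z.re
        _ ≤ (|z₀.re| + 1) * T := by
            apply mul_le_mul hzre htT ht0 (by positivity)
    have hb2 : ‖(-(t:ℂ))‖ ≤ T := by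
      rw [norm_neg]
      rw [Complex.norm_real, Real.norm_eq_abs, _root_.abs_of_nonneg ht0]
      exact htT
    have hb3 : ‖g t‖ ≤ Bg := hBg t ⟨ht0, htT⟩
    apply mul_le_mul _ hb3 (norm_nonneg _) (by positivity)
    apply mul_le_mul hb1 hb2 (norm_nonneg _) (Real.exp_pos _).le
  · exact intervalIntegrable_const
  · filter_upwards with t
    intro ht z hz
    have : HasDerivAt (fun z : ℂ => -z * t) (-(t:ℂ)) z := by
      simpa using ((hasDerivAt_id z).neg.mul_const (t:ℂ))
    exact ((Complex.hasDerivAt_exp _).comp z this).mul_const (g t)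


lemma norm_exp_neg_mul (z : ℂ) (t : ℝ) : ‖Complex.exp (-z * t)‖ = Real.exp (-z.re * t) := by
  rw [Complex.norm_exp]
  congr 1
  simp [Complex.mul_re]

lemma exp_int_Ioi {x : ℝ} (hx : 0 < x) (T : ℝ) :
    ∫ t in Ioi T, Real.exp (-x*t) = Real.exp (-x*T) / x := by
  have hderiv : ∀ s ∈ Ici T, HasDerivAt (fun u : ℝ => -(Real.exp (-x*u) / x))
      (Real.exp (-x*s)) s := by
    intro s _
    have h1 : HasDerivAt (fun u : ℝ => -x*u) (-x) s := by
      simpa using (hasDerivAt_id s).const_mul (-x)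
    have h2 := (Real.hasDerivAt_exp (-x*s)).comp s h1
    have h3 := (h2.div_const x).neg
    have he : Real.exp (-x*s) = -(Real.exp (-x*s) * -x / x) := by
      field_simp
    rw [he]
    exact h3
  have hint : IntegrableOn (fun s : ℝ => Real.exp (-x*s)) (Ioi T) :=
    exp_neg_integrableOn_Ioi T hx
  have htend : Tendsto (fun u : ℝ => -(Real.exp (-x*u) / x)) atTop (nhds 0) := by
    have h1 : Tendsto (fun u : ℝ => x * u) atTop atTop :=
      Tendsto.const_mul_atTop hx tendsto_id
    have h2 : Tendsto (fun u : ℝ => Real.exp (-(x*u))) atTop (nhds 0) :=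
      Real.tendsto_exp_neg_atTop_nhds_zero.comp h1
    have h3 : Tendsto (fun u : ℝ => -(Real.exp (-(x*u))/x)) atTop (nhds (-(0/x))) :=
      (h2.div_const x).neg
    simpa [neg_mul] using h3
  have := integral_Ioi_of_hasDerivAt_of_tendsto' hderiv hint htend
  rw [this]
  field_simp
  ring

lemma exp_int_interval {x : ℝ} (hx : x ≠ 0) (T : ℝ) :
    ∫ t in (0:ℝ)..T, Real.exp (x*t) = (Real.exp (x*T) - 1)/x := by
  rw [intervalIntegral.integral_comp_mul_left Real.exp hx]
  simp [smul_eq_mul, div_eq_inv_mul]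

lemma lap_integrableOn {g : ℝ → ℂ} {B : ℝ} (hg : ContinuousOn g (Ici 0))
    (hB : ∀ t : ℝ, 0 ≤ t → ‖g t‖ ≤ B) {z : ℂ} (hx : 0 < z.re) {a : ℝ} (ha : 0 ≤ a) :
    IntegrableOn (fun t : ℝ => Complex.exp (-z * t) * g t) (Ioi a) := by
  have hmeas : AEStronglyMeasurable (fun t : ℝ => Complex.exp (-z * t) * g t)
      (volume.restrict (Ioi a)) := by
    apply ContinuousOn.aestronglyMeasurable _ measurableSet_Ioi
    exact ((Continuous.continuousOn (by continuity)).mul hg).mono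
      (fun t ht => le_trans ha (le_of_lt ht))
  have hbound : IntegrableOn (fun t : ℝ => B * Real.exp (-z.re * t)) (Ioi a) := by
    simpa [neg_mul, IntegrableOn] using ((exp_neg_integrableOn_Ioi a hx).const_mul B)
  apply Integrable.mono' hbound hmeas
  rw [ae_restrict_iff' measurableSet_Ioi]
  filter_upwards with t ht
  rw [norm_mul, norm_exp_neg_mul]
  have h1 : ‖g t‖ ≤ B := hB t (le_trans ha (le_of_lt ht))
  calc Real.exp (-z.re * t) * ‖g t‖ ≤ Real.exp (-z.re * t) * B :=
        mul_le_mul_of_nonneg_left h1 (Real.exp_pos _).le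
    _ = B * Real.exp (-z.re * t) := mul_comm _ _

lemma lap_tail_bound {g : ℝ → ℂ} {B : ℝ} (hg : ContinuousOn g (Ici 0))
    (hB : ∀ t : ℝ, 0 ≤ t → ‖g t‖ ≤ B) {z : ℂ} (hx : 0 < z.re) {T : ℝ} (hT : 0 ≤ T) :
    Real.exp (z.re * T) * ‖∫ t in Ioi T, Complex.exp (-z * t) * g t‖ ≤ B / z.re := by
  have hbound : IntegrableOn (fun t : ℝ => B * Real.exp (-z.re * t)) (Ioi T) := by
    simpa [neg_mul, IntegrableOn] using ((exp_neg_integrableOn_Ioi T hx).const_mul B)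
  have h1 : ‖∫ t in Ioi T, Complex.exp (-z * t) * g t‖
      ≤ ∫ t in Ioi T, B * Real.exp (-z.re * t) := by
    apply MeasureTheory.norm_integral_le_of_norm_le hbound
    rw [ae_restrict_iff' measurableSet_Ioi]
    filter_upwards with t ht
    rw [norm_mul, norm_exp_neg_mul]
    calc Real.exp (-z.re * t) * ‖g t‖ ≤ Real.exp (-z.re * t) * B :=
          mul_le_mul_of_nonneg_left (hB t (le_trans hT (le_of_lt ht))) (Real.exp_pos _).le
      _ = B * Real.exp (-z.re * t) := mul_comm _ _
  have h2 : ∫ t in Ioi T, B * Real.exp (-z.re * t) = B * (Real.exp (-z.re * T) / z.re) := by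
    rw [MeasureTheory.integral_const_mul, exp_int_Ioi hx]
  have hBnn : 0 ≤ B := le_trans (norm_nonneg _) (hB 0 le_rfl)
  calc Real.exp (z.re * T) * ‖∫ t in Ioi T, Complex.exp (-z * t) * g t‖
      ≤ Real.exp (z.re * T) * (B * (Real.exp (-z.re * T) / z.re)) := by
        apply mul_le_mul_of_nonneg_left _ (Real.exp_pos _).le
        rw [← h2]; exact h1
    _ = B / z.re := by
        have h3 : Real.exp (z.re*T) * Real.exp (-z.re*T) = 1 := by
          rw [← Real.exp_add]; ring_nf; exact Real.exp_zero
        calc Real.exp (z.re*T) * (B * (Real.exp (-z.re*T)/z.re))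
            = (Real.exp (z.re*T) * Real.exp (-z.re*T)) * B / z.re := by ring
          _ = B / z.re := by rw [h3, one_mul]
  
lemma lap_split {g : ℝ → ℂ} {B : ℝ} (hg : ContinuousOn g (Ici 0))
    (hB : ∀ t : ℝ, 0 ≤ t → ‖g t‖ ≤ B) {z : ℂ} (hx : 0 < z.re) {T : ℝ} (hT : 0 ≤ T) :
    ∫ t in Ioi (0:ℝ), Complex.exp (-z * t) * g t
      = (∫ t in (0:ℝ)..T, Complex.exp (-z * t) * g t)
        + ∫ t in Ioi T, Complex.exp (-z * t) * g t := by
  rw [intervalIntegral.integral_of_le hT]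
  rw [← MeasureTheory.setIntegral_union (Set.Ioc_disjoint_Ioi le_rfl) measurableSet_Ioi
    ((lap_integrableOn hg hB hx le_rfl).mono_set Set.Ioc_subset_Ioi_self)
    (lap_integrableOn hg hB hx hT)]
  rw [Set.Ioc_union_Ioi_eq_Ioi hT]

lemma GT_bound_left {g : ℝ → ℂ} {B : ℝ} (hg : ContinuousOn g (Ici 0))
    (hB : ∀ t : ℝ, 0 ≤ t → ‖g t‖ ≤ B) {z : ℂ} (hx : z.re < 0) {T : ℝ} (hT : 0 ≤ T) :
    Real.exp (z.re * T) * ‖∫ t in (0:ℝ)..T, Complex.exp (-z * t) * g t‖ ≤ B / (-z.re) := by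
  have hBnn : 0 ≤ B := le_trans (norm_nonneg _) (hB 0 le_rfl)
  have hbint : IntervalIntegrable (fun t : ℝ => B * Real.exp (-z.re * t)) volume 0 T := by
    apply Continuous.intervalIntegrable; continuity
  have h1 : ‖∫ t in (0:ℝ)..T, Complex.exp (-z * t) * g t‖
      ≤ |∫ t in (0:ℝ)..T, B * Real.exp (-z.re * t)| := by
    apply intervalIntegral.norm_integral_le_abs_of_norm_le _ hbint
    rw [uIoc_of_le hT, ae_restrict_iff' measurableSet_Ioc]
    filter_upwards with t ht
    rw [norm_mul, norm_exp_neg_mul]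
    calc Real.exp (-z.re * t) * ‖g t‖ ≤ Real.exp (-z.re * t) * B :=
          mul_le_mul_of_nonneg_left (hB t ht.1.le) (Real.exp_pos _).le
      _ = B * Real.exp (-z.re * t) := mul_comm _ _
  have h2 : ∫ t in (0:ℝ)..T, B * Real.exp (-z.re * t)
      = B * ((Real.exp (-z.re * T) - 1) / (-z.re)) := by
    rw [intervalIntegral.integral_const_mul, exp_int_interval (by linarith : -z.re ≠ 0)]
  have h3 : 0 ≤ ∫ t in (0:ℝ)..T, B * Real.exp (-z.re * t) := by
    apply intervalIntegral.integral_nonneg hT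
    intro t _; positivity
  rw [_root_.abs_of_nonneg h3, h2] at h1
  have key : Real.exp (z.re * T) * (B * ((Real.exp (-z.re * T) - 1) / (-z.re)))
      ≤ B / (-z.re) := by
    have hee : Real.exp (z.re*T) * Real.exp (-z.re*T) = 1 := by
      rw [← Real.exp_add]; ring_nf; exact Real.exp_zero
    have hpos : (0:ℝ) < -z.re := by linarith
    have hL : Real.exp (z.re*T) * (B * ((Real.exp (-z.re * T) - 1) / (-z.re)))
        = (B * (Real.exp (z.re*T) * Real.exp (-z.re*T)) - B * Real.exp (z.re*T)) / (-z.re) := by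
      ring
    rw [hL, hee, mul_one]
    apply (div_le_div_iff_of_pos_right hpos).mpr
    have : 0 ≤ B * Real.exp (z.re*T) := mul_nonneg hBnn (Real.exp_pos _).le
    linarith
  calc Real.exp (z.re * T) * ‖∫ t in (0:ℝ)..T, Complex.exp (-z * t) * g t‖
      ≤ Real.exp (z.re * T) * (B * ((Real.exp (-z.re * T) - 1) / (-z.re))) :=
        mul_le_mul_of_nonneg_left h1 (Real.exp_pos _).le
    _ ≤ B / (-z.re) := key

lemma psi_sphere_eq {r : ℝ} {z : ℂ} (hr : 0 ≤ r) (hz : z ∈ Metric.sphere (1:ℂ) r) :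
    z^2 + ((r^2 - 1 : ℝ) : ℂ) = 2*(z-1)*(z.re : ℂ) := by
  have hzn : ‖z - 1‖ = r := by
    rwa [Metric.mem_sphere, dist_eq_norm] at hz
  have h := Complex.mul_conj (z - 1)
  rw [Complex.normSq_eq_norm_sq, hzn] at h
  have hc : (starRingEnd ℂ) (z - 1) = ((2 * z.re : ℝ) : ℂ) - z - 1 := by
    rw [map_sub, map_one,
      show (starRingEnd ℂ) z = ((2*z.re:ℝ):ℂ) - z from by linear_combination (Complex.add_conj z)]
  rw [hc] at h
  push_cast at h ⊢
  linear_combination -h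

/- MAIN -/
set_option maxHeartbeats 1600000 in
/-- If `f : [0,∞) → ℂ` is bounded continuous and its Laplace transform extends analytically
to an open neighborhood of the closed half-plane `{Re λ ≥ 0}`, then for every `v ∈ ℝ` the
primitive `t ↦ ∫₀^t e^{-i v s} f(s) ds` is bounded on `[0,∞)`. -/
theorem stmt17 (f : ℝ → ℂ) (B : ℝ) (hf : ContinuousOn f (Set.Ici 0))
    (hB : ∀ t : ℝ, 0 ≤ t → ‖f t‖ ≤ B)
    (hext : ∃ U : Set ℂ, IsOpen U ∧ {l : ℂ | 0 ≤ l.re} ⊆ U ∧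
      ∃ F : ℂ → ℂ, DifferentiableOn ℂ F U ∧
        ∀ l : ℂ, 0 < l.re → F l = ∫ t in Set.Ioi (0 : ℝ), f t * Complex.exp (-l * t)) :
    ∀ v : ℝ, ∃ C : ℝ, ∀ t : ℝ, 0 ≤ t →
      ‖∫ s in (0 : ℝ)..t, Complex.exp (-(Complex.I * v) * s) * f s‖ ≤ C := by
  have hBnn : 0 ≤ B := le_trans (norm_nonneg _) (hB 0 le_rfl)
  obtain ⟨U, hUo, hUsub, F, hFd, hFval⟩ := hext
  intro v
  set g : ℝ → ℂ := fun t => Complex.exp (-(Complex.I * v) * t) * f t with hgdef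
  have hgc : ContinuousOn g (Ici 0) := (Continuous.continuousOn (by continuity)).mul hf
  have hgB : ∀ t : ℝ, 0 ≤ t → ‖g t‖ ≤ B := by
    intro t ht
    rw [hgdef]; simp only [norm_mul]
    have h1 : ‖Complex.exp (-(Complex.I * v) * t)‖ = 1 := by
      rw [Complex.norm_exp]
      norm_num [Complex.mul_re]
    rw [h1, one_mul]; exact hB t ht
  -- the shifted Laplace transform
  set G : ℂ → ℂ := fun z => F (z + Complex.I * v) with hGdef
  set UU : Set ℂ := (fun z : ℂ => z + Complex.I * v) ⁻¹' U with hUUdef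
  have hUUo : IsOpen UU := hUo.preimage (by continuity)
  have hre : ∀ z : ℂ, (z + Complex.I * v).re = z.re := by intro z; simp
  have hUUsub : {z : ℂ | 0 ≤ z.re} ⊆ UU := by
    intro z hz
    exact hUsub (by simp only [mem_setOf_eq, hre]; exact hz)
  have hGd : DifferentiableOn ℂ G UU := by
    exact DifferentiableOn.comp hFd
      ((differentiable_id.add_const (Complex.I*(v:ℂ))).differentiableOn) (fun z hz => hz)
  have hGval : ∀ z : ℂ, 0 < z.re →
      G z = ∫ t in Ioi (0:ℝ), Complex.exp (-z * t) * g t := by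
    intro z hz
    rw [hGdef]; simp only
    rw [hFval _ (by rw [hre]; exact hz)]
    apply MeasureTheory.integral_congr_ae
    filter_upwards with t
    rw [hgdef]; simp only
    rw [show -(z + Complex.I*(v:ℂ)) * t = -z*t + -(Complex.I*v)*t by ring, Complex.exp_add]
    ring
  -- geometry: fit a circle C(1, 1+δ) inside UU
  set K : Set ℂ := Metric.closedBall 0 4 ∩ {z : ℂ | 0 ≤ z.re} with hKdef
  have hKcpt : IsCompact K := (isCompact_closedBall _ _).inter_right
    (isClosed_le continuous_const Complex.continuous_re)
  have hKU : K ⊆ UU := fun z hz => hUUsub hz.2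
  obtain ⟨δ', hδ'pos, hδ'sub⟩ := hKcpt.exists_thickening_subset_open hUUo hKU
  set δ : ℝ := min (δ'/2) (1/2) with hδdef
  have hδpos : 0 < δ := lt_min (by linarith) (by norm_num)
  have hδle : δ ≤ 1/2 := min_le_right _ _
  have hδδ' : δ < δ' := lt_of_le_of_lt (min_le_left _ _) (by linarith)
  set r : ℝ := 1 + δ with hrdef
  have hr1 : 1 < r := by rw [hrdef]; linarith
  have hr0 : 0 ≤ r := by linarith
  have hball : Metric.closedBall (1:ℂ) r ⊆ UU := by
    intro z hz
    rw [Metric.mem_closedBall, dist_eq_norm] at hz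
    have hzb : ‖z‖ ≤ r + 1 := by
      calc ‖z‖ = ‖(z - 1) + 1‖ := by ring_nf
        _ ≤ ‖z - 1‖ + ‖(1:ℂ)‖ := norm_add_le _ _
        _ ≤ r + 1 := by rw [norm_one]; linarith
    by_cases hcase : 0 ≤ z.re
    · apply hKU
      refine ⟨?_, hcase⟩
      rw [Metric.mem_closedBall, dist_zero_right]
      linarith [hδle]
    · apply hδ'sub
      rw [Metric.mem_thickening_iff]
      refine ⟨(z.im : ℂ) * Complex.I, ⟨?_, ?_⟩, ?_⟩
      · rw [Metric.mem_closedBall, dist_zero_right]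
        have him : ‖(z.im : ℂ) * Complex.I‖ = |z.im| := by
          rw [norm_mul, Complex.norm_I, mul_one, Complex.norm_real, Real.norm_eq_abs]
        rw [him]
        calc |z.im| ≤ ‖z‖ := Complex.abs_im_le_norm z
          _ ≤ r + 1 := hzb
          _ ≤ 4 := by linarith [hδle]
      · simp
      · have hzw : z - (z.im : ℂ) * Complex.I = (z.re : ℂ) := by
          linear_combination -Complex.re_add_im z
        rw [dist_eq_norm, hzw, Complex.norm_real, Real.norm_eq_abs]
        have hrelb : -δ ≤ z.re := by
          have := Complex.abs_re_le_norm (z - 1)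
          have h2 : |z.re - 1| ≤ r := by
            simpa using this.trans hz
          have := abs_le.1 h2
          linarith [this.1]
        rw [abs_of_neg (not_le.1 hcase)]
        linarith
  -- the kernel ψ
  set ψ : ℂ → ℂ := fun z => z^2 + ((r^2 - 1 : ℝ) : ℂ) with hψdef
  have hψent : Differentiable ℂ ψ := by
    apply Differentiable.add_const
    exact differentiable_pow 2
  have hψr : (0:ℝ) < r^2 - 1 := by nlinarith
  -- bound for G on the closed ball
  obtain ⟨M, hM⟩ := (isCompact_closedBall (1:ℂ) r).exists_bound_of_continuousOn
    (hGd.continuousOn.mono hball)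
  have hMnn : 0 ≤ M := le_trans (norm_nonneg _)
    (hM 1 (Metric.mem_closedBall_self (by linarith)))
  set C₁ : ℝ := 2*r*B + 2*r*B + δ*(2*r*M) with hC₁def
  have hC₁nn : 0 ≤ C₁ := by
    rw [hC₁def]
    have h1 : (0:ℝ) ≤ 2*r*B := by positivity
    have h2 : (0:ℝ) ≤ δ*(2*r*M) := by positivity
    linarith
  set C₀ : ℝ := δ⁻¹ * C₁ with hC₀def
  have hC₀nn : 0 ≤ C₀ := by
    rw [hC₀def]
    positivity
  refine ⟨‖G 0‖ + r * C₀ / (r^2 - 1), ?_⟩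
  intro T hT
  -- the truncated transform
  set GT : ℂ → ℂ := fun z => ∫ t in (0:ℝ)..T, Complex.exp (-z * t) * g t with hGTdef
  have hGTdiff : Differentiable ℂ GT := GT_differentiable hgc hT
  set A : ℂ → ℂ := fun z => Complex.exp (z * T) * ψ z with hAdef
  have hAent : Differentiable ℂ A := by
    apply Differentiable.mul _ hψent
    exact (differentiable_id.mul_const _).cexp
  have hA0 : A 0 = ((r^2 - 1 : ℝ) : ℂ) := by
    rw [hAdef]; simp [hψdef]
  have h0ball : (0:ℂ) ∈ Metric.ball (1:ℂ) r := by
    rw [Metric.mem_ball, dist_eq_norm]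
    simpa using hr1
  -- Cauchy's formula for both
  have h1 : (∮ z in C((1:ℂ), r), (z - 0)⁻¹ • (A z * GT z))
      = (2 * Real.pi * Complex.I : ℂ) • (A 0 * GT 0) :=
    DifferentiableOn.circleIntegral_sub_inv_smul
      ((hAent.mul hGTdiff).differentiableOn) h0ball
  have h2 : (∮ z in C((1:ℂ), r), (z - 0)⁻¹ • (A z * G z))
      = (2 * Real.pi * Complex.I : ℂ) • (A 0 * G 0) :=
    DifferentiableOn.circleIntegral_sub_inv_smul
      ((hAent.differentiableOn).mul (hGd.mono hball)) h0ball
  -- subtract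
  have hsphere0 : ∀ z ∈ Metric.sphere (1:ℂ) r, z ≠ 0 := by
    intro z hz h0
    rw [Metric.mem_sphere] at hz
    rw [h0] at hz
    simp only [dist_zero_left] at hz
    rw [norm_one] at hz
    linarith
  have hcont_inv : ContinuousOn (fun z : ℂ => (z - 0)⁻¹) (Metric.sphere (1:ℂ) r) := by
    simp only [sub_zero]
    exact ContinuousOn.inv₀ continuous_id.continuousOn hsphere0
  have hint1 : CircleIntegrable (fun z => (z - 0)⁻¹ • (A z * GT z)) 1 r := by
    apply ContinuousOn.circleIntegrable hr0
    exact hcont_inv.smul ((hAent.continuous.mul hGTdiff.continuous).continuousOn)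
  have hint2 : CircleIntegrable (fun z => (z - 0)⁻¹ • (A z * G z)) 1 r := by
    apply ContinuousOn.circleIntegrable hr0
    apply hcont_inv.smul
    apply (hAent.continuous.continuousOn).mul
    exact (hGd.continuousOn.mono hball).mono Metric.sphere_subset_closedBall
  have hDeq : (fun z : ℂ => (z - 0)⁻¹ • (A z * (GT z - G z)))
      = fun z : ℂ => ((z - 0)⁻¹ • (A z * GT z)) - ((z - 0)⁻¹ • (A z * G z)) := by
    funext z
    simp only [smul_eq_mul]
    ring
  have hDint : (∮ z in C((1:ℂ), r), (z - 0)⁻¹ • (A z * (GT z - G z)))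
      = (2 * Real.pi * Complex.I : ℂ) • (A 0 * (GT 0 - G 0)) := by
    rw [hDeq, circleIntegral.integral_sub hint1 hint2, h1, h2, ← smul_sub]
    congr 1
    ring
  -- pointwise bound on the sphere
  have hptwise : ∀ z ∈ Metric.sphere (1:ℂ) r,
      ‖(z - 0)⁻¹ • (A z * (GT z - G z))‖ ≤ C₀ := by
    intro z hz
    have hzn : ‖z - 1‖ = r := by rwa [Metric.mem_sphere, dist_eq_norm] at hz
    have hznorm : δ ≤ ‖z‖ := by
      have h1 : r ≤ ‖z‖ + 1 := by
        calc r = ‖z - 1‖ := hzn.symm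
          _ ≤ ‖z‖ + ‖(1:ℂ)‖ := norm_sub_le _ _
          _ = ‖z‖ + 1 := by rw [norm_one]
      linarith [hrdef]
    have hz0 : z ≠ 0 := by
      intro h
      rw [h, norm_zero] at hznorm
      linarith
    have hinv : ‖(z - 0)⁻¹‖ ≤ δ⁻¹ := by
      rw [sub_zero, norm_inv]
      exact inv_anti₀ hδpos hznorm
    have hψz : ψ z = 2*(z-1)*(z.re:ℂ) := psi_sphere_eq hr0 hz
    have hψnorm : ‖ψ z‖ = 2*r*|z.re| := by
      rw [hψz, norm_mul, norm_mul, hzn, Complex.norm_real, Real.norm_eq_abs]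
      norm_num
    have hexp : ‖Complex.exp (z*T)‖ = Real.exp (z.re*T) := by
      rw [Complex.norm_exp]
      congr 1
      simp [Complex.mul_re]
    have hnormD : ‖(z - 0)⁻¹ • (A z * (GT z - G z))‖
        = ‖(z-0)⁻¹‖ * ((2*r*|z.re|) * (Real.exp (z.re*T) * ‖GT z - G z‖)) := by
      rw [norm_smul]
      simp only [hAdef]
      rw [norm_mul, norm_mul, hexp, hψnorm]
      ring
    rw [hnormD]
    have hQ : (2*r*|z.re|) * (Real.exp (z.re*T) * ‖GT z - G z‖) ≤ C₁ := by
      rcases lt_trichotomy z.re 0 with hneg | hzero | hpos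
      · -- left part of the circle
        have hxle : -z.re ≤ δ := by
          have h1 := Complex.abs_re_le_norm (z-1)
          rw [hzn] at h1
          have h2 : |z.re - 1| ≤ r := by simpa using h1
          have h3 := (abs_le.1 h2).1
          rw [hrdef] at h3
          linarith
        have hGTb : Real.exp (z.re*T) * ‖GT z‖ ≤ B/(-z.re) := by
          simp only [hGTdef]
          exact GT_bound_left hgc hgB hneg hT
        have hGb : ‖G z‖ ≤ M := hM z (Metric.sphere_subset_closedBall hz)
        have hE1 : Real.exp (z.re*T) ≤ 1 := by
          apply Real.exp_le_one_iff.2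
          exact mul_nonpos_of_nonpos_of_nonneg hneg.le hT
        have hEN : Real.exp (z.re*T) * ‖GT z - G z‖ ≤ B/(-z.re) + M := by
          calc Real.exp (z.re*T) * ‖GT z - G z‖
              ≤ Real.exp (z.re*T) * (‖GT z‖ + ‖G z‖) :=
                mul_le_mul_of_nonneg_left (norm_sub_le _ _) (Real.exp_pos _).le
            _ = Real.exp (z.re*T) * ‖GT z‖ + Real.exp (z.re*T) * ‖G z‖ := by ring
            _ ≤ B/(-z.re) + 1 * M := by
                apply add_le_add hGTb
                apply mul_le_mul hE1 hGb (norm_nonneg _) zero_le_one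
            _ = B/(-z.re) + M := by ring
        have habs : |z.re| = -z.re := abs_of_neg hneg
        have hxne : -z.re ≠ 0 := by linarith
        have hxB : (-z.re) * (B / (-z.re)) = B := by
          rw [mul_comm]; exact div_mul_cancel₀ B hxne
        calc (2*r*|z.re|) * (Real.exp (z.re*T) * ‖GT z - G z‖)
            ≤ (2*r*|z.re|) * (B/(-z.re) + M) := by
              apply mul_le_mul_of_nonneg_left hEN (by positivity)
          _ = 2*r*((-z.re) * (B/(-z.re))) + 2*r*((-z.re) * M) := by
              rw [habs]; ring
          _ = 2*r*B + 2*r*((-z.re) * M) := by rw [hxB]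
          _ ≤ C₁ := by
              rw [hC₁def]
              have h6 : (-z.re) * M ≤ δ * M := mul_le_mul_of_nonneg_right hxle hMnn
              have h7 : (0:ℝ) ≤ 2*r*B := by positivity
              nlinarith [hr0]
      · rw [hzero]
        simp only [abs_zero, mul_zero, zero_mul]
        exact hC₁nn
      · -- right part of the circle
        have hsp := lap_split hgc hgB hpos hT
        have hGz : G z = GT z + ∫ t in Ioi T, Complex.exp (-z * t) * g t := by
          rw [hGval z hpos, hsp, hGTdef]
        have hN : ‖GT z - G z‖ = ‖∫ t in Ioi T, Complex.exp (-z * t) * g t‖ := by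
          rw [hGz]
          rw [show GT z - (GT z + ∫ t in Ioi T, Complex.exp (-z * t) * g t)
            = -(∫ t in Ioi T, Complex.exp (-z * t) * g t) from by ring, norm_neg]
        have htail : Real.exp (z.re*T) * ‖∫ t in Ioi T, Complex.exp (-z * t) * g t‖
            ≤ B/z.re := lap_tail_bound hgc hgB hpos hT
        have habs : |z.re| = z.re := abs_of_pos hpos
        have hxB : z.re * (B / z.re) = B := by
          rw [mul_comm]; exact div_mul_cancel₀ B hpos.ne'
        calc (2*r*|z.re|) * (Real.exp (z.re*T) * ‖GT z - G z‖)
            ≤ (2*r*|z.re|) * (B/z.re) := by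
              apply mul_le_mul_of_nonneg_left _ (by positivity)
              rw [hN]; exact htail
          _ = 2*r*(z.re * (B/z.re)) := by rw [habs]; ring
          _ = 2*r*B := by rw [hxB]
          _ ≤ C₁ := by
              rw [hC₁def]
              have h7 : (0:ℝ) ≤ 2*r*B := by positivity
              have h8 : (0:ℝ) ≤ δ*(2*r*M) := by positivity
              linarith
    have hQnn : 0 ≤ (2*r*|z.re|) * (Real.exp (z.re*T) * ‖GT z - G z‖) := by
      apply mul_nonneg (mul_nonneg (by linarith) (abs_nonneg _))
      exact mul_nonneg (Real.exp_pos _).le (norm_nonneg _)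
    calc ‖(z-0)⁻¹‖ * ((2*r*|z.re|) * (Real.exp (z.re*T) * ‖GT z - G z‖))
        ≤ δ⁻¹ * C₁ := by
          apply mul_le_mul hinv hQ hQnn (by positivity)
      _ = C₀ := hC₀def.symm
  -- assemble
  have hbound : ‖∮ z in C((1:ℂ), r), (z - 0)⁻¹ • (A z * (GT z - G z))‖
      ≤ 2*Real.pi*r*C₀ :=
    circleIntegral.norm_integral_le_of_norm_le_const hr0 hptwise
  rw [hDint] at hbound
  have hnorm2pi : ‖(2*(Real.pi:ℝ)*Complex.I : ℂ)‖ = 2*Real.pi := by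
    rw [norm_mul, norm_mul, Complex.norm_I, mul_one, Complex.norm_real, Real.norm_eq_abs,
      abs_of_pos Real.pi_pos]
    norm_num
  have hAnorm : ‖A 0 * (GT 0 - G 0)‖ = (r^2-1) * ‖GT 0 - G 0‖ := by
    rw [norm_mul, hA0, Complex.norm_real, Real.norm_eq_abs, abs_of_pos hψr]
  rw [norm_smul] at hbound
  rw [hAnorm] at hbound
  have hle2 : ‖GT 0 - G 0‖ ≤ r * C₀ / (r^2 - 1) := by
    rw [le_div_iff₀ hψr]
    have hpi := Real.pi_pos
    rw [hnorm2pi] at hbound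
    nlinarith [hbound]
  have hfinal : ‖GT 0‖ ≤ ‖G 0‖ + r * C₀ / (r^2-1) := by
    calc ‖GT 0‖ = ‖(GT 0 - G 0) + G 0‖ := by ring_nf
      _ ≤ ‖GT 0 - G 0‖ + ‖G 0‖ := norm_add_le _ _
      _ ≤ r * C₀ / (r^2-1) + ‖G 0‖ := by linarith
      _ = ‖G 0‖ + r * C₀ / (r^2-1) := by ring
  have htarget : (∫ s in (0:ℝ)..T, Complex.exp (-(Complex.I*v) * s) * f s) = GT 0 := by
    rw [hGTdef]
    simp only
    apply intervalIntegral.integral_congr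
    intro s _
    rw [hgdef]
    simp
  rw [htarget]
  exact hfinal
end
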